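/- Fix a positive integer n, let λ ∈ H(1,n) be singular with λ₁ − n = λ'_j + n − j, and let λ^♯ be as defined from λ. Then c̃_λ = c̃_{λ^♯}, where c̃_μ = Σ_{(i,j)∈μ} (2j − 2i + 1 − 2n). -/

import Mathlib

/-- A partition: a weakly decreasing sequence of naturals indexed from 1 (value at 0 unused, set to 0). -/
def IsPartition (P : ℕ → ℕ) : Prop :=
  P 0 = 0 ∧ ∀ i, 1 ≤ i → P (i + 1) ≤ P i

/-- The conjugate partition: `λ'_j = |{i : 1 ≤ i ≤ N, λ_i ≥ j}|`, `N` a bound for the rows. -/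
def conj (P : ℕ → ℕ) (N : ℕ) (j : ℕ) : ℕ :=
  ((Finset.Icc 1 N).filter (fun i => j ≤ P i)).card

/-- `r(λ) = |{r : j ≤ r ≤ n, λ'_r = λ'_j}|`. -/
def rnum (n N : ℕ) (P : ℕ → ℕ) (j : ℕ) : ℕ :=
  ((Finset.Icc j n).filter (fun r => conj P N r = conj P N j)).card

/-- `λ^♯`: delete `r` boxes from the first row and `r` boxes from the row of index `i₀`. -/
def sharp (P : ℕ → ℕ) (i₀ r : ℕ) : ℕ → ℕ :=
  Function.update (Function.update P i₀ (P i₀ - r)) 1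
    (Function.update P i₀ (P i₀ - r) 1 - r)

/-- `c̃_λ = Σ_{(i,j)∈λ} (2j − 2i + 1 − 2n)`. -/
def ctilde (n : ℕ) (P : ℕ → ℕ) (N : ℕ) : ℤ :=
  ∑ i ∈ Finset.Icc 1 N, ∑ j ∈ Finset.Icc 1 (P i),
    (2 * (j : ℤ) - 2 * (i : ℤ) + 1 - 2 * (n : ℤ))

lemma rowsum (n i L : ℕ) :
    ∑ j ∈ Finset.Icc 1 L, (2*(j:ℤ) - 2*(i:ℤ) + 1 - 2*(n:ℤ))
      = L * ((L:ℤ) + 2 - 2*i - 2*n) := by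
  induction L with
  | zero => simp
  | succ L ih =>
    rw [Finset.sum_Icc_succ_top (by omega), ih]
    push_cast; ring

lemma ctilde_eq (n : ℕ) (P : ℕ → ℕ) (N : ℕ) :
    ctilde n P N = ∑ i ∈ Finset.Icc 1 N,
      (P i : ℤ) * ((P i : ℤ) + 2 - 2*i - 2*n) := by
  exact Finset.sum_congr rfl fun i _ => rowsum n i (P i)

/-- For a singular diagram `λ ∈ H(1,n)` with `λ₁ − n = λ'_j + n − j`, one has `c̃_λ = c̃_{λ^♯}`. -/
theorem ctilde_sharp (n : ℕ) (hn : 1 ≤ n) (P : ℕ → ℕ) (hP : IsPartition P)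
    (hH : P 2 ≤ n) (N : ℕ) (hN : ∀ i, N < i → P i = 0)
    (j : ℕ) (hj : 1 ≤ j) (hjn : j ≤ n)
    (heq : (P 1 : ℤ) - (n : ℤ) = (conj P N j : ℤ) + (n : ℤ) - (j : ℤ)) :
    ctilde n P N = ctilde n (sharp P (conj P N j) (rnum n N P j)) N := by
  have mono : ∀ a b : ℕ, 1 ≤ a → a ≤ b → P b ≤ P a := by
    intro a b ha hab
    obtain ⟨k, rfl⟩ := Nat.exists_eq_add_of_le hab
    clear hab
    induction k with
    | zero => simp
    | succ k ih =>
      calc P (a + (k+1)) = P ((a+k) + 1) := by ring_nf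
        _ ≤ P (a + k) := hP.2 _ (by omega)
        _ ≤ P a := ih
  set i₀ := conj P N j with hi₀def
  have hcard : ((Finset.Icc 1 N).filter (fun i => j ≤ P i)).card = i₀ := rfl
  have hN1 : 1 ≤ N := by
    by_contra h
    have hNz : N = 0 := by omega
    have h1 : P 1 = 0 := hN 1 (by omega)
    have h2 : i₀ = 0 := by simp [hi₀def, conj, hNz]
    rw [h1, h2] at heq
    push_cast at heq
    omega
  have hjP1 : j ≤ P 1 := by omega
  have hi₀pos : 1 ≤ i₀ := by
    rw [← hcard]
    apply Finset.card_pos.mpr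
    exact ⟨1, Finset.mem_filter.mpr ⟨Finset.mem_Icc.mpr ⟨le_refl 1, hN1⟩, hjP1⟩⟩
  have hi₀N : i₀ ≤ N := by
    rw [← hcard]
    calc ((Finset.Icc 1 N).filter (fun i => j ≤ P i)).card
        ≤ (Finset.Icc 1 N).card := Finset.card_filter_le _ _
      _ = N := by simp [Nat.card_Icc]
  have hPi₀j : j ≤ P i₀ := by
    by_contra h
    have hsub : (Finset.Icc 1 N).filter (fun i => j ≤ P i) ⊆ Finset.Icc 1 (i₀ - 1) := by
      intro i hi
      simp only [Finset.mem_filter, Finset.mem_Icc] at hi ⊢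
      refine ⟨hi.1.1, ?_⟩
      by_contra h2
      have : P i ≤ P i₀ := mono i₀ i hi₀pos (by omega)
      omega
    have := Finset.card_le_card hsub
    rw [hcard, Nat.card_Icc] at this
    omega
  have hPi₀1 : P (i₀ + 1) < j := by
    by_contra h
    push_neg at h
    have hle : i₀ + 1 ≤ N := by
      by_contra h2
      have := hN (i₀ + 1) (by omega)
      omega
    have hsub : Finset.Icc 1 (i₀ + 1) ⊆ (Finset.Icc 1 N).filter (fun i => j ≤ P i) := by
      intro i hi
      simp only [Finset.mem_Icc] at hi
      refine Finset.mem_filter.mpr ⟨Finset.mem_Icc.mpr ⟨hi.1, by omega⟩, ?_⟩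
      exact le_trans h (mono i (i₀ + 1) hi.1 hi.2)
    have := Finset.card_le_card hsub
    rw [hcard, Nat.card_Icc] at this
    omega
  have hconj_eq : ∀ s, j ≤ s → s ≤ P i₀ → conj P N s = i₀ := by
    intro s hjs hsP
    have hsub1 : Finset.Icc 1 i₀ ⊆ (Finset.Icc 1 N).filter (fun i => s ≤ P i) := by
      intro i hi
      simp only [Finset.mem_Icc] at hi
      refine Finset.mem_filter.mpr ⟨Finset.mem_Icc.mpr ⟨hi.1, le_trans hi.2 hi₀N⟩, ?_⟩
      exact le_trans hsP (mono i i₀ hi.1 hi.2)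
    have hsub2 : (Finset.Icc 1 N).filter (fun i => s ≤ P i) ⊆ Finset.Icc 1 i₀ := by
      intro i hi
      simp only [Finset.mem_filter, Finset.mem_Icc] at hi ⊢
      refine ⟨hi.1.1, ?_⟩
      by_contra h2
      have : P i ≤ P (i₀ + 1) := mono (i₀ + 1) i (by omega) (by omega)
      omega
    have : (Finset.Icc 1 N).filter (fun i => s ≤ P i) = Finset.Icc 1 i₀ :=
      Finset.Subset.antisymm hsub2 hsub1
    rw [conj, this, Nat.card_Icc]
    omega
  have hconj_lt : ∀ s, P i₀ < s → conj P N s < i₀ := by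
    intro s hsP
    have hsub : (Finset.Icc 1 N).filter (fun i => s ≤ P i) ⊆ Finset.Icc 1 (i₀ - 1) := by
      intro i hi
      simp only [Finset.mem_filter, Finset.mem_Icc] at hi ⊢
      refine ⟨hi.1.1, ?_⟩
      by_contra h2
      have : P i ≤ P i₀ := mono i₀ i hi₀pos (by omega)
      omega
    have := Finset.card_le_card hsub
    rw [Nat.card_Icc] at this
    calc conj P N s ≤ i₀ - 1 := this
      _ < i₀ := by omega
  have hrnum : rnum n N P j = min n (P i₀) + 1 - j := by
    have hfe : (Finset.Icc j n).filter (fun s => conj P N s = conj P N j)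
        = Finset.Icc j (min n (P i₀)) := by
      ext s
      simp only [Finset.mem_filter, Finset.mem_Icc, ← hi₀def, le_min_iff]
      constructor
      · rintro ⟨⟨h1, h2⟩, h3⟩
        refine ⟨h1, h2, ?_⟩
        by_contra h4
        exact absurd h3 (Nat.ne_of_lt (hconj_lt s (by omega)))
      · rintro ⟨h1, h2, h3⟩
        exact ⟨⟨h1, h2⟩, hconj_eq s h1 h3⟩
    rw [rnum, hfe, Nat.card_Icc]
  set r := rnum n N P j with hrdef
  have hQoff : ∀ i, i ≠ 1 → i ≠ i₀ → sharp P i₀ r i = P i := by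
    intro i h1 h2
    rw [sharp, Function.update_of_ne h1, Function.update_of_ne h2]
  rw [ctilde_eq, ctilde_eq]
  rcases eq_or_ne i₀ 1 with hc | hc
  · -- i₀ = 1 : both removals hit row 1
    have hP1n : n < P 1 := by omega
    have hmin : min n (P i₀) = n := by rw [hc]; omega
    have hR : (r : ℤ) = n + 1 - j := by
      rw [hrnum, hmin]; omega
    have hQ1 : sharp P i₀ r 1 = P 1 - r - r := by
      rw [sharp, hc, Function.update_self, Function.update_self]
    apply Finset.sum_congr rfl
    intro i hi
    rcases eq_or_ne i 1 with rfl | hne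
    · rw [hQ1]
      have h2r : r + r ≤ P 1 := by omega
      have hcast : ((P 1 - r - r : ℕ) : ℤ) = (P 1 : ℤ) - r - r := by omega
      rw [hcast]
      push_cast
      linear_combination (4 * (r:ℤ)) * heq - (4 * (r:ℤ)) * hR
        + (4 * (r:ℤ)) * congrArg (Nat.cast : ℕ → ℤ) hc
    · rw [hQoff i hne (hc ▸ hne)]
  · -- i₀ ≥ 2
    have hi₀2 : 2 ≤ i₀ := by omega
    have hPi₀n : P i₀ ≤ n := le_trans (mono 2 i₀ (by omega) hi₀2) hH
    have hmin : min n (P i₀) = P i₀ := by omega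
    have hR : (r : ℤ) = (P i₀ : ℤ) + 1 - j := by
      rw [hrnum, hmin]; omega
    have hrPi₀ : r ≤ P i₀ := by omega
    have hrP1 : r ≤ P 1 := by omega
    have hQ1 : sharp P i₀ r 1 = P 1 - r := by
      rw [sharp, Function.update_self, Function.update_of_ne (Ne.symm hc)]
    have hQi₀ : sharp P i₀ r i₀ = P i₀ - r := by
      rw [sharp, Function.update_of_ne hc, Function.update_self]
    have ht : ({1, i₀} : Finset ℕ) ⊆ Finset.Icc 1 N := by
      intro x hx
      simp only [Finset.mem_insert, Finset.mem_singleton] at hx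
      rcases hx with rfl | rfl <;> simp [Finset.mem_Icc] <;> omega
    rw [← Finset.sum_sdiff ht, ← Finset.sum_sdiff ht]
    congr 1
    · apply Finset.sum_congr rfl
      intro i hi
      simp only [Finset.mem_sdiff, Finset.mem_insert, Finset.mem_singleton] at hi
      push_neg at hi
      rw [hQoff i hi.2.1 hi.2.2]
    · rw [Finset.sum_pair (Ne.symm hc), Finset.sum_pair (Ne.symm hc)]
      rw [hQ1, hQi₀, Nat.cast_sub hrP1, Nat.cast_sub hrPi₀]
      push_cast
      linear_combination (2 * (r:ℤ)) * heq - (2 * (r:ℤ)) * hR
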